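/- Let G be a finite simple graph containing a set T of pairwise twin vertices with |T| ≥ 3, let u ∈ T, and let G_u denote the induced subgraph of G on V(G) \ {u}. Then: (i) if S_u is a zero forcing set of G_u, then S_u ∪ {u} is a zero forcing set of G; and (ii) if S is a zero forcing set of G with u ∈ S, then S \ {u} is a zero forcing set of G_u. Consequently S ↦ S \ {u} is a bijection between the zero forcing sets of G containing u and the zero forcing sets of G_u. -/

import Mathlib

/-- The TAR (token addition/removal) graph of a predicate `P` on finite subsets of `V`:
vertices are the `P`-sets, two `P`-sets being adjacent iff their symmetric difference
has exactly one element. -/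
def tarGraph {V : Type*} [DecidableEq V] (P : Finset V → Prop) :
    SimpleGraph {S : Finset V // P S} where
  Adj S T := (symmDiff S.1 T.1).card = 1
  symm := by constructor; intro S T h; simpa [symmDiff_comm] using h
  loopless := by constructor; intro S h; simp [symmDiff_self] at h

/-- `S` is a minimal `P`-set: `S` is a `P`-set and no proper subset of `S` is a `P`-set. -/
def IsMinimalPSet {V : Type*} (P : Finset V → Prop) (S : Finset V) : Prop :=
  P S ∧ ∀ T : Finset V, T ⊂ S → ¬ P T

/-- `R` is `P`-irrelevant: no minimal `P`-set contains any vertex of `R`. -/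
def IsIrrelevant {V : Type*} (P : Finset V → Prop) (R : Finset V) : Prop :=
  ∀ S : Finset V, IsMinimalPSet P S → ∀ v ∈ R, v ∉ S

/-- A set `B` is forcing-closed in `G` if no vertex of `B` has exactly one neighbor
outside `B` (i.e. no force can be performed from `B`). The zero forcing closure of `S`
is the smallest forcing-closed set containing `S`. -/
def ZFClosed {V : Type*} (G : SimpleGraph V) (B : Finset V) : Prop :=
  ∀ v ∈ B, ¬ ∃! w : V, G.Adj v w ∧ w ∉ B

/-- `S` is a zero forcing set of `G`: the zero forcing closure of `S` is all of `V`,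
equivalently every forcing-closed set containing `S` is all of `V`. -/
def IsZeroForcingSet {V : Type*} [Fintype V] (G : SimpleGraph V) (S : Finset V) : Prop :=
  ∀ B : Finset V, S ⊆ B → ZFClosed G B → B = Finset.univ

lemma twin_part_i {V : Type*} [Fintype V] [DecidableEq V] (G : SimpleGraph V) (u : V)
    (Su : Finset {v : V // v ≠ u})
    (h : IsZeroForcingSet (G.comap (Subtype.val : {v : V // v ≠ u} → V)) Su) :
    IsZeroForcingSet G (insert u (Su.map ⟨Subtype.val, Subtype.val_injective⟩)) := by
  intro B hSB hB
  have huB : u ∈ B := hSB (Finset.mem_insert_self _ _)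
  have hB' : B.subtype (· ≠ u) = Finset.univ := by
    apply h
    · intro x hx
      rw [Finset.mem_subtype]
      exact hSB (Finset.mem_insert_of_mem (Finset.mem_map_of_mem _ hx))
    · rintro ⟨v, hv⟩ hvB ⟨⟨w, hw⟩, ⟨hadj, hwB⟩, huniq⟩
      rw [Finset.mem_subtype] at hvB hwB
      refine hB v hvB ⟨w, ⟨hadj, hwB⟩, ?_⟩
      rintro w' ⟨hadj', hw'B⟩
      have hw'u : w' ≠ u := fun h => hw'B (h ▸ huB)
      have := huniq ⟨w', hw'u⟩ ⟨hadj', by rwa [Finset.mem_subtype]⟩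
      exact congrArg Subtype.val this
  ext x
  simp only [Finset.mem_univ, iff_true]
  by_cases hx : x = u
  · exact hx ▸ huB
  · have : (⟨x, hx⟩ : {v : V // v ≠ u}) ∈ B.subtype (· ≠ u) := hB' ▸ Finset.mem_univ _
    rwa [Finset.mem_subtype] at this

lemma twin_part_ii {V : Type*} [Fintype V] [DecidableEq V]
    (G : SimpleGraph V) (T : Finset V) (hT : 3 ≤ T.card)
    (htwin : ∀ v ∈ T, ∀ w ∈ T, v ≠ w → G.neighborSet v = G.neighborSet w)
    (u : V) (hu : u ∈ T) (S : Finset V) (hS : IsZeroForcingSet G S) (huS : u ∈ S) :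
    IsZeroForcingSet (G.comap (Subtype.val : {v : V // v ≠ u} → V))
      (S.subtype (· ≠ u)) := by
  have hadj_iff : ∀ a ∈ T, ∀ b ∈ T, a ≠ b → ∀ x, G.Adj a x ↔ G.Adj b x := by
    intro a ha b hb hab x
    have hset := htwin a ha b hb hab
    constructor <;> intro hh
    · rw [← SimpleGraph.mem_neighborSet, ← hset]; exact hh
    · rw [← SimpleGraph.mem_neighborSet, hset]; exact hh
  obtain ⟨t1, ht1, t2, ht2, hne⟩ : ∃ a ∈ T.erase u, ∃ b ∈ T.erase u, a ≠ b := by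
    rw [← Finset.one_lt_card, Finset.card_erase_of_mem hu]
    omega
  obtain ⟨ht1u, ht1T⟩ := Finset.mem_erase.mp ht1
  obtain ⟨ht2u, ht2T⟩ := Finset.mem_erase.mp ht2
  intro Bu hSBu hBu
  by_cases hcase : ∃ t : {v : V // v ≠ u}, t ∈ Bu ∧ t.1 ∈ T
  · obtain ⟨t, htBu, htT⟩ := hcase
    set B : Finset V := insert u (Bu.map ⟨Subtype.val, Subtype.val_injective⟩) with hBdef
    have huB : u ∈ B := Finset.mem_insert_self _ _
    have hmemB : ∀ x : V, x ∈ B ↔ x = u ∨ ∃ hx : x ≠ u, (⟨x, hx⟩ : {v : V // v ≠ u}) ∈ Bu := by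
      intro x
      rw [hBdef, Finset.mem_insert, Finset.mem_map]
      constructor
      · rintro (h | ⟨⟨y, hy⟩, hyBu, rfl⟩)
        · exact Or.inl h
        · exact Or.inr ⟨hy, hyBu⟩
      · rintro (h | ⟨hx, hxBu⟩)
        · exact Or.inl h
        · exact Or.inr ⟨⟨x, hx⟩, hxBu, rfl⟩
    have hBclosed : ZFClosed G B := by
      rintro v hvB ⟨w, ⟨hadj, hwB⟩, huniq⟩
      have hwu : w ≠ u := fun h => hwB (h ▸ huB)
      have hwBu : (⟨w, hwu⟩ : {v : V // v ≠ u}) ∉ Bu := fun h =>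
        hwB ((hmemB w).2 (Or.inr ⟨hwu, h⟩))
      rcases (hmemB v).1 hvB with hvu | ⟨hvu, hvBu⟩
      · subst hvu
        refine hBu t htBu ⟨⟨w, hwu⟩, ⟨?_, hwBu⟩, ?_⟩
        · exact (hadj_iff v hu t.1 htT (Ne.symm t.2) w).1 hadj
        · rintro ⟨w', hw'u⟩ ⟨hadj', hw'Bu⟩
          have hadj'' : G.Adj v w' := (hadj_iff t.1 htT v hu t.2 w').1 hadj'
          have hw'B : w' ∉ B := fun h => by
            rcases (hmemB w').1 h with h' | ⟨_, h'⟩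
            · exact hw'u h'
            · exact hw'Bu h'
          have := huniq w' ⟨hadj'', hw'B⟩
          exact Subtype.ext this
      · refine hBu ⟨v, hvu⟩ hvBu ⟨⟨w, hwu⟩, ⟨hadj, hwBu⟩, ?_⟩
        rintro ⟨w', hw'u⟩ ⟨hadj', hw'Bu⟩
        have hw'B : w' ∉ B := fun h => by
          rcases (hmemB w').1 h with h' | ⟨_, h'⟩
          · exact hw'u h'
          · exact hw'Bu h'
        exact Subtype.ext (huniq w' ⟨hadj', hw'B⟩)
    have hBuniv : B = Finset.univ := by
      apply hS B _ hBclosed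
      intro x hxS
      by_cases hx : x = u
      · exact (hmemB x).2 (Or.inl hx)
      · refine (hmemB x).2 (Or.inr ⟨hx, ?_⟩)
        have : (⟨x, hx⟩ : {v : V // v ≠ u}) ∈ S.subtype (· ≠ u) := by
          rw [Finset.mem_subtype]; exact hxS
        exact hSBu this
    ext ⟨x, hx⟩
    simp only [Finset.mem_univ, iff_true]
    have : x ∈ B := hBuniv ▸ Finset.mem_univ x
    rcases (hmemB x).1 this with h' | ⟨_, h'⟩
    · exact absurd h' hx
    · exact h'
  · exfalso
    push_neg at hcase
    set C : Finset V := Finset.univ \ {t1, t2} with hCdef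
    have hnotBu : ∀ (x : V) (hx : x ≠ u), x ∈ T → (⟨x, hx⟩ : {v : V // v ≠ u}) ∉ Bu :=
      fun x hx hxT h => hcase ⟨x, hx⟩ h hxT
    have hSC : S ⊆ C := by
      intro x hxS
      rw [hCdef, Finset.mem_sdiff]
      refine ⟨Finset.mem_univ x, ?_⟩
      intro hmem
      rcases Finset.mem_insert.mp hmem with rfl | hmem2
      · exact hnotBu x ht1u ht1T (hSBu (Finset.mem_subtype.mpr hxS))
      · rcases Finset.mem_singleton.mp hmem2 with rfl
        exact hnotBu x ht2u ht2T (hSBu (Finset.mem_subtype.mpr hxS))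
    have hCclosed : ZFClosed G C := by
      rintro v hvC ⟨w, ⟨hadj, hwC⟩, huniq⟩
      have hw12 : w ∈ ({t1, t2} : Finset V) := by
        by_contra h
        exact hwC (Finset.mem_sdiff.mpr ⟨Finset.mem_univ w, h⟩)
      have ht1C : t1 ∉ C := fun h =>
        (Finset.mem_sdiff.mp h).2 (Finset.mem_insert_self _ _)
      have ht2C : t2 ∉ C := fun h =>
        (Finset.mem_sdiff.mp h).2 (Finset.mem_insert.mpr (Or.inr (Finset.mem_singleton_self _)))
      rcases Finset.mem_insert.mp hw12 with rfl | hw2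
      · have hadj2 : G.Adj v t2 := by
          have : G.Adj w v := hadj.symm
          exact ((hadj_iff w ht1T t2 ht2T hne v).1 this).symm
        exact hne.symm (huniq t2 ⟨hadj2, ht2C⟩)
      · rcases Finset.mem_singleton.mp hw2 with rfl
        have hadj1 : G.Adj v t1 := by
          have : G.Adj w v := hadj.symm
          exact ((hadj_iff w ht2T t1 ht1T hne.symm v).1 this).symm
        exact hne (huniq t1 ⟨hadj1, ht1C⟩)
    have := hS C hSC hCclosed
    have ht1C : t1 ∉ C := fun h =>
      (Finset.mem_sdiff.mp h).2 (Finset.mem_insert_self _ _)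
    exact ht1C (this ▸ Finset.mem_univ t1)

/-- Let `G` contain a set `T` of pairwise twins with `|T| ≥ 3`, let `u ∈ T`, and let
`G_u` be the induced subgraph of `G` on `V \ {u}`. Then (i) if `S_u` is a zero forcing
set of `G_u` then `S_u ∪ {u}` is a zero forcing set of `G`; (ii) if `S` is a zero
forcing set of `G` with `u ∈ S` then `S \ {u}` is a zero forcing set of `G_u`; and
consequently `S ↦ S \ {u}` is a bijection between the zero forcing sets of `G`
containing `u` and the zero forcing sets of `G_u`. -/
theorem twin_deletion_zfs {V : Type*} [Fintype V] [DecidableEq V]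
    (G : SimpleGraph V) (T : Finset V) (hT : 3 ≤ T.card)
    (htwin : ∀ v ∈ T, ∀ w ∈ T, v ≠ w → G.neighborSet v = G.neighborSet w)
    (u : V) (hu : u ∈ T) :
    (∀ Su : Finset {v : V // v ≠ u},
        IsZeroForcingSet (G.comap (Subtype.val : {v : V // v ≠ u} → V)) Su →
        IsZeroForcingSet G (insert u (Su.map ⟨Subtype.val, Subtype.val_injective⟩))) ∧
    (∀ S : Finset V, IsZeroForcingSet G S → u ∈ S →
        IsZeroForcingSet (G.comap (Subtype.val : {v : V // v ≠ u} → V))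
          (S.subtype (· ≠ u))) ∧
    ∃ e : {S : Finset V // IsZeroForcingSet G S ∧ u ∈ S} ≃
        {Su : Finset {v : V // v ≠ u} //
          IsZeroForcingSet (G.comap (Subtype.val : {v : V // v ≠ u} → V)) Su},
      ∀ S, (e S).1 = S.1.subtype (· ≠ u) := by
  refine ⟨fun Su h => twin_part_i G u Su h,
    fun S hS huS => twin_part_ii G T hT htwin u hu S hS huS, ?_⟩
  refine ⟨{
    toFun := fun S => ⟨S.1.subtype (· ≠ u),
      twin_part_ii G T hT htwin u hu S.1 S.2.1 S.2.2⟩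
    invFun := fun Su => ⟨insert u (Su.1.map ⟨Subtype.val, Subtype.val_injective⟩),
      twin_part_i G u Su.1 Su.2, Finset.mem_insert_self _ _⟩
    left_inv := ?_
    right_inv := ?_ }, fun S => rfl⟩
  · rintro ⟨S, hS, huS⟩
    apply Subtype.ext
    simp only
    ext x
    simp only [Finset.mem_insert, Finset.mem_map, Finset.mem_subtype,
      Function.Embedding.coeFn_mk]
    constructor
    · rintro (rfl | ⟨⟨y, hy⟩, hyS, rfl⟩)
      · exact huS
      · exact hyS
    · intro hxS
      by_cases hx : x = u
      · exact Or.inl hx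
      · exact Or.inr ⟨⟨x, hx⟩, hxS, rfl⟩
  · rintro ⟨Su, hSu⟩
    apply Subtype.ext
    simp only
    ext ⟨x, hx⟩
    simp only [Finset.mem_subtype, Finset.mem_insert, Finset.mem_map,
      Function.Embedding.coeFn_mk]
    constructor
    · rintro (rfl | ⟨⟨y, hy⟩, hyS, h⟩)
      · exact absurd rfl hx
      · cases h; exact hyS
    · intro hmem
      exact Or.inr ⟨⟨x, hx⟩, hmem, rfl⟩
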